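/- arXiv:1711.11336 — 3 statements merged into one kernel-verified Lean document; each statement's English description precedes it below -/
import Mathlib

section
/- The span of the 2k+1 vectors |η_ℓ^j⟩ is invariant under U_α, and in this basis U_α acts by the (2k+1)×(2k+1) matrix u_α with entries ⟨ℓ′,j′|u_α|ℓ,j⟩ = (−1)^j (1 − 2(k−ℓ)/(N−r)) δ_{ℓℓ′} δ_{jj′} + 2 √((k−ℓ)/(N−r)) √(1 − (k−ℓ)/(N−r)) δ_{ℓℓ′} δ_{j⊕1, j′}. -/
/-- The set `η_ℓ^j = {(S,y) ∈ V : |S ∩ K| = ℓ, |{y} ∩ K| = j}`. -/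
def etaSet (N r : ℕ) (K : Finset (Fin N)) (l j : ℕ) :
    Finset {p : Finset (Fin N) × Fin N // p.1.card = r ∧ p.2 ∉ p.1} :=
  Finset.univ.filter (fun p => (p.val.1 ∩ K).card = l ∧ ({p.val.2} ∩ K).card = j)

/-- The normalized uniform superposition `|η_ℓ^j⟩`. -/
noncomputable def etaVec (N r : ℕ) (K : Finset (Fin N)) (l j : ℕ) :
    {p : Finset (Fin N) × Fin N // p.1.card = r ∧ p.2 ∉ p.1} → ℂ :=
  fun p => if p ∈ etaSet N r K l j
    then ((1 / Real.sqrt ((etaSet N r K l j).card) : ℝ) : ℂ) else 0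

/-- `|α_S⟩ = (N-r)^{-1/2} ∑_{y∉S} |S,y⟩`. -/
noncomputable def alphaVec (N r : ℕ) (S : Finset (Fin N)) :
    {p : Finset (Fin N) × Fin N // p.1.card = r ∧ p.2 ∉ p.1} → ℂ :=
  fun p => if p.val.1 = S then ((1 / Real.sqrt (N - r) : ℝ) : ℂ) else 0

/-- The operator `U_α = 2 ∑_S |α_S⟩⟨α_S| - I`. -/
noncomputable def Ualpha (N r : ℕ) :
    Matrix {p : Finset (Fin N) × Fin N // p.1.card = r ∧ p.2 ∉ p.1}
      {p : Finset (Fin N) × Fin N // p.1.card = r ∧ p.2 ∉ p.1} ℂ :=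
  (2 : ℂ) • (∑ S ∈ Finset.univ.filter (fun S : Finset (Fin N) => S.card = r),
      Matrix.vecMulVec (alphaVec N r S) (star (alphaVec N r S))) - 1

/-- The index set of valid pairs `(ℓ,j)`, excluding `(k,1)`. -/
def pairSet (k : ℕ) : Finset (ℕ × ℕ) :=
  (Finset.range (k + 1) ×ˢ Finset.range 2).filter (fun q => ¬(q.1 = k ∧ q.2 = 1))

/-- The matrix element `⟨ℓ',j'|u_α|ℓ,j⟩`. -/
noncomputable def uAlphaEntry (N r k : ℕ) (l j l' j' : ℕ) : ℝ :=
  (-1 : ℝ) ^ j * (1 - 2 * ((k : ℝ) - l) / ((N : ℝ) - r))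
      * (if l = l' ∧ j = j' then 1 else 0)
    + 2 * Real.sqrt (((k : ℝ) - l) / ((N : ℝ) - r))
        * Real.sqrt (1 - ((k : ℝ) - l) / ((N : ℝ) - r))
        * (if l = l' ∧ 1 - j = j' then 1 else 0)

section Aux

abbrev Vt (N r : ℕ) := {p : Finset (Fin N) × Fin N // p.1.card = r ∧ p.2 ∉ p.1}

/-- number of sets `A` with `|A| = r`, `|A ∩ K| = l` -/
def nS (N r : ℕ) (K : Finset (Fin N)) (l : ℕ) : ℕ :=
  (Finset.univ.filter fun A : Finset (Fin N) => A.card = r ∧ (A ∩ K).card = l).card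

/-- fiber size: number of valid `y` for a fixed `A` -/
def mj (N r k l j : ℕ) : ℕ := if j = 1 then k - l else N - r - (k - l)

variable {N r k : ℕ} {K : Finset (Fin N)}

lemma mem_etaSet_iff {l j : ℕ} (p : Vt N r) :
    p ∈ etaSet N r K l j ↔ (p.val.1 ∩ K).card = l ∧ ({p.val.2} ∩ K).card = j := by
  simp [etaSet]

lemma singleton_inter_card (y : Fin N) :
    ({y} ∩ K).card = if y ∈ K then 1 else 0 := by
  split_ifs with h
  · rw [Finset.singleton_inter_of_mem h, Finset.card_singleton]
  · rw [Finset.singleton_inter_of_notMem h, Finset.card_empty]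

lemma sum_V {M : Type*} [AddCommMonoid M] (N r : ℕ) (f : Finset (Fin N) × Fin N → M) :
    ∑ q : Vt N r, f q.val
      = ∑ A ∈ Finset.univ.filter (fun A : Finset (Fin N) => A.card = r),
          ∑ y ∈ Aᶜ, f (A, y) := by
  rw [← Finset.sum_subtype
      (Finset.univ.filter (fun p : Finset (Fin N) × Fin N => p.1.card = r ∧ p.2 ∉ p.1))
      (by simp) f]
  rw [Finset.sum_filter, Fintype.sum_prod_type]
  rw [Finset.sum_filter]
  refine Finset.sum_congr rfl fun A _ => ?_
  by_cases hA : A.card = r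
  · simp only [hA, true_and, if_true, ← Finset.mem_compl]
    rw [Finset.sum_ite_mem, Finset.univ_inter]
  · simp [hA]

lemma fiber_card (hK : K.card = k) {A : Finset (Fin N)} (hAr : A.card = r) {l : ℕ}
    (hA : (A ∩ K).card = l) (j : ℕ) (hj : j ≤ 1) :
    (Aᶜ.filter fun y : Fin N => ({y} ∩ K).card = j).card = mj N r k l j := by
  interval_cases j
  · have : (Aᶜ.filter fun y : Fin N => ({y} ∩ K).card = 0) = (A ∪ K)ᶜ := by
      ext y
      simp [singleton_inter_card, Finset.mem_filter, Finset.mem_compl]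
    rw [this, Finset.card_compl]
    have h2 := Finset.card_union_add_card_inter A K
    have hlk : l ≤ k := by rw [← hK, ← hA]; exact Finset.card_le_card Finset.inter_subset_right
    have hrA : (A ∪ K).card ≤ N := by
      have := Finset.card_le_card (Finset.subset_univ (A ∪ K))
      simpa using this
    have hm : mj N r k l 0 = N - r - (k - l) := by simp [mj]
    simp only [Fintype.card_fin, hm]
    omega
  · have : (Aᶜ.filter fun y : Fin N => ({y} ∩ K).card = 1) = K \ A := by
      ext y
      simp [singleton_inter_card, Finset.mem_filter, Finset.mem_compl, Finset.mem_sdiff]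
      tauto
    rw [this]
    have h2 := Finset.card_sdiff_add_card_inter K A
    rw [Finset.inter_comm] at h2
    have hm : mj N r k l 1 = k - l := by simp [mj]
    simp only [hm]
    omega

lemma card_etaSet (hK : K.card = k) (l : ℕ) (j : ℕ) (hj : j ≤ 1) :
    (etaSet N r K l j).card = nS N r K l * mj N r k l j := by
  classical
  have h1 : (etaSet N r K l j).card
      = ∑ q : Vt N r, (if (q.val.1 ∩ K).card = l ∧ ({q.val.2} ∩ K).card = j then 1 else 0) := by
    rw [etaSet, Finset.card_filter]
  rw [h1, sum_V N r (fun x => if (x.1 ∩ K).card = l ∧ ({x.2} ∩ K).card = j then 1 else 0)]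
  have h2 : ∀ A ∈ Finset.univ.filter (fun A : Finset (Fin N) => A.card = r),
      (∑ y ∈ Aᶜ, if (A ∩ K).card = l ∧ ({y} ∩ K).card = j then 1 else 0)
        = if (A ∩ K).card = l then mj N r k l j else 0 := by
    intro A hA
    have hAr : A.card = r := by simpa using hA
    by_cases hl : (A ∩ K).card = l
    · simp only [hl, true_and, if_true]
      rw [← Finset.card_filter]
      exact fiber_card hK hAr hl j hj
    · simp [hl]
  rw [Finset.sum_congr rfl h2, ← Finset.sum_filter, Finset.filter_filter]
  simp [nS, Finset.sum_const, mul_comm]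

end Aux

section More
variable {N r k : ℕ} {K : Finset (Fin N)}


lemma star_alphaVec (S' : Finset (Fin N)) (q : Vt N r) :
    star (alphaVec N r S' q) = alphaVec N r S' q := by
  simp [alphaVec, apply_ite (star : ℂ → ℂ)]

lemma Ualpha_apply (hrN : r ≤ N) (p q : Vt N r) :
    Ualpha N r p q
      = 2 * (if q.val.1 = p.val.1 then ((1 / ((N:ℝ) - r) : ℝ) : ℂ) else 0)
        - (if p = q then 1 else 0) := by
  have hD : (0:ℝ) ≤ (N:ℝ) - r := by
    have : (r:ℝ) ≤ N := by exact_mod_cast hrN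
    linarith
  have hsum : (∑ S' ∈ Finset.univ.filter (fun S : Finset (Fin N) => S.card = r),
        alphaVec N r S' p * star (alphaVec N r S' q))
      = (if q.val.1 = p.val.1 then ((1 / ((N:ℝ) - r) : ℝ) : ℂ) else 0) := by
    rw [Finset.sum_eq_single_of_mem p.val.1 (by simp [p.prop.1])]
    · rw [star_alphaVec]
      simp only [alphaVec, eq_self_iff_true, if_true, mul_ite, mul_zero]
      congr 1
      rw [← Complex.ofReal_mul, div_mul_div_comm, one_mul, Real.mul_self_sqrt hD]
    · intro S' _ hne
      simp [alphaVec, Ne.symm hne]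
  simp only [Ualpha, Matrix.sub_apply, Matrix.smul_apply, Matrix.sum_apply,
    Matrix.vecMulVec_apply, Matrix.one_apply, smul_eq_mul, Pi.star_apply]
  rw [hsum]

lemma Ualpha_mulVec (hrN : r ≤ N) (v : Vt N r → ℂ) (p : Vt N r) :
    (Ualpha N r).mulVec v p
      = ((2 / ((N:ℝ) - r) : ℝ) : ℂ) * (∑ q : Vt N r, if q.val.1 = p.val.1 then v q else 0)
        - v p := by
  simp only [Matrix.mulVec, dotProduct]
  calc ∑ q : Vt N r, Ualpha N r p q * v q
      = ∑ q : Vt N r,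
          (2 * ((if q.val.1 = p.val.1 then ((1 / ((N:ℝ) - r) : ℝ) : ℂ) else 0) * v q)
            - (if p = q then 1 else 0) * v q) := by
        refine Finset.sum_congr rfl fun q _ => ?_
        rw [Ualpha_apply hrN, sub_mul, mul_assoc]
    _ = 2 * ∑ q : Vt N r, ((if q.val.1 = p.val.1 then ((1 / ((N:ℝ) - r) : ℝ) : ℂ) else 0) * v q)
          - v p := by
        rw [Finset.sum_sub_distrib, ← Finset.mul_sum]
        congr 1
        simp only [ite_mul, one_mul, zero_mul, Finset.sum_ite_eq, Finset.mem_univ, if_true]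
    _ = ((2 / ((N:ℝ) - r) : ℝ) : ℂ) * (∑ q : Vt N r, if q.val.1 = p.val.1 then v q else 0)
          - v p := by
        congr 1
        rw [Finset.mul_sum, Finset.mul_sum]
        refine Finset.sum_congr rfl fun q _ => ?_
        rw [ite_mul, zero_mul, mul_ite, mul_zero, mul_ite, mul_zero]
        congr 1
        push_cast
        ring

set_option maxHeartbeats 1000000 in
lemma sum_fiber (hK : K.card = k) {l j : ℕ} (hj : j ≤ 1) {S : Finset (Fin N)} (hS : S.card = r) :
    (∑ q : Vt N r, if q.val.1 = S then etaVec N r K l j q else 0)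
      = if (S ∩ K).card = l then
          (((mj N r k l j : ℝ) / Real.sqrt ((etaSet N r K l j).card) : ℝ) : ℂ) else 0 := by
  have he : ∀ q : Vt N r, (if q.val.1 = S then etaVec N r K l j q else 0)
      = (fun x : Finset (Fin N) × Fin N =>
          if x.1 = S ∧ (x.1 ∩ K).card = l ∧ ({x.2} ∩ K).card = j
          then (((1 / Real.sqrt ((etaSet N r K l j).card) : ℝ)) : ℂ) else 0) q.val := by
    intro q
    simp only [etaVec, mem_etaSet_iff, ite_and]
  have h2 := sum_V N r (fun x : Finset (Fin N) × Fin N =>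
          if x.1 = S ∧ (x.1 ∩ K).card = l ∧ ({x.2} ∩ K).card = j
          then (((1 / Real.sqrt ((etaSet N r K l j).card) : ℝ)) : ℂ) else 0)
  rw [Finset.sum_congr rfl (fun q _ => he q), h2]
  simp only []
  rw [Finset.sum_eq_single_of_mem S (by simp [hS])]
  · by_cases hl : (S ∩ K).card = l
    · simp only [hl, true_and, if_pos rfl, eq_self_iff_true, if_true]
      rw [← Finset.sum_filter, Finset.sum_const, nsmul_eq_mul,
        fiber_card hK hS hl j hj]
      push_cast
      ring
    · simp [hl]
  · intro A _ hne
    simp [hne]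

end More

section Key
variable {N r k : ℕ} {K : Finset (Fin N)}

lemma offdiag_helper (D n a b : ℝ) (hD : 0 < D) (hn : 0 < n) (ha : 0 < a) (hb : 0 < b) :
    2 / D * (a / Real.sqrt (n * a)) - 0
      = 2 * Real.sqrt (b / D) * Real.sqrt (a / D) * (1 / Real.sqrt (n * b)) := by
  have h1 := Real.mul_self_sqrt ha.le
  have h2 := Real.mul_self_sqrt hD.le
  rw [Real.sqrt_mul hn.le a, Real.sqrt_mul hn.le b, Real.sqrt_div ha.le, Real.sqrt_div hb.le]
  set sa := Real.sqrt a with hsa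
  set sb := Real.sqrt b with hsb
  set sn := Real.sqrt n with hsn2
  set sD := Real.sqrt D with hsD
  have hsa0 : 0 < sa := Real.sqrt_pos.2 ha
  have hsb0 : 0 < sb := Real.sqrt_pos.2 hb
  have hsn0 : 0 < sn := Real.sqrt_pos.2 hn
  have hsD0 : 0 < sD := Real.sqrt_pos.2 hD
  rw [← h1, ← h2]
  field_simp
  ring

lemma key (hkr : k ≤ r) (hkN : k + r < N) (hK : K.card = k)
    {l j L J : ℕ} (hl : l ≤ k) (hj : j ≤ 1) (hnot : ¬(l = k ∧ j = 1))
    (hJ : J ≤ 1)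
    (hpos : 0 < (etaSet N r K L J).card) :
    (2 / ((N:ℝ) - r)) *
        (if L = l then (mj N r k l j : ℝ) / Real.sqrt ((etaSet N r K l j).card) else 0)
      - (if L = l ∧ J = j then 1 / Real.sqrt ((etaSet N r K l j).card) else 0)
      = uAlphaEntry N r k l j L J * (1 / Real.sqrt ((etaSet N r K L J).card)) := by
  by_cases hLl : L = l
  · subst hLl
    have hD : (0:ℝ) < (N:ℝ) - r := by
      have : (r:ℝ) + 1 ≤ N := by exact_mod_cast Nat.succ_le_of_lt (by omega)
      linarith
    have hm1 : (mj N r k L 1 : ℝ) = (k:ℝ) - L := by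
      simp only [mj, if_pos rfl]
      have : L ≤ k := hl
      push_cast [this]
      ring
    have hm0 : (mj N r k L 0 : ℝ) = ((N:ℝ) - r) - ((k:ℝ) - L) := by
      have h1 : mj N r k L 0 = N - r - (k - L) := by simp [mj]
      rw [h1]
      have : k - L ≤ N - r := by omega
      push_cast [Nat.cast_sub, this, (by omega : r ≤ N), (by omega : L ≤ k)]
      ring
    rw [card_etaSet hK L J hJ, card_etaSet hK L j hj]
    have hposn : 0 < nS N r K L := by
      rcases Nat.eq_zero_or_pos (nS N r K L) with h | h
      · rw [card_etaSet hK L J hJ, h] at hpos; simp at hpos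
      · exact h
    have hposJ : 0 < mj N r k L J := by
      rcases Nat.eq_zero_or_pos (mj N r k L J) with h | h
      · rw [card_etaSet hK L J hJ, h] at hpos; simp at hpos
      · exact h
    have hm0pos : (0:ℝ) < (mj N r k L 0 : ℝ) := by
      rw [hm0]
      have : (L:ℝ) ≥ 0 := by positivity
      have hk' : (k:ℝ) + r + 1 ≤ N := by exact_mod_cast hkN
      have hLk : (L:ℝ) ≤ k := by exact_mod_cast hl
      linarith
    have hnR : (0:ℝ) < (nS N r K L : ℝ) := by exact_mod_cast hposn
    have e2 : Real.sqrt (1 - ((k:ℝ) - L) / ((N:ℝ) - r))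
        = Real.sqrt ((mj N r k L 0 : ℝ) / ((N:ℝ) - r)) := by
      congr 1
      rw [hm0]
      field_simp
    have e1 : Real.sqrt (((k:ℝ) - L) / ((N:ℝ) - r))
        = Real.sqrt ((mj N r k L 1 : ℝ) / ((N:ℝ) - r)) := by rw [hm1]
    interval_cases j <;> interval_cases J <;>
      simp only [uAlphaEntry, eq_self_iff_true, true_and, and_true, if_true, pow_zero, pow_one,
        Nat.sub_self, Nat.sub_zero, one_ne_zero, zero_ne_one, if_false, and_false, false_and]
    · -- j = 0, J = 0
      have hc : (1:ℝ) * (1 - 2 * ((k:ℝ) - L) / ((N:ℝ) - r)) * 1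
            + 2 * Real.sqrt (((k:ℝ) - L) / ((N:ℝ) - r))
              * Real.sqrt (1 - ((k:ℝ) - L) / ((N:ℝ) - r)) * 0
          = 2 / ((N:ℝ) - r) * (mj N r k L 0 : ℝ) - 1 := by
        rw [hm0]
        field_simp
        ring
      rw [hc]
      ring
    · -- j = 0, J = 1
      have hbpos : (0:ℝ) < (mj N r k L 1 : ℝ) := by exact_mod_cast hposJ
      rw [e1, e2, Nat.cast_mul, Nat.cast_mul]
      exact (offdiag_helper ((N:ℝ) - r) _ _ _ hD hnR hm0pos hbpos).trans (by ring)
    · -- j = 1, J = 0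
      have hapos : (0:ℝ) < (mj N r k L 1 : ℝ) := by
        have hLk : L < k := by
          rcases Nat.lt_or_ge L k with h | h
          · exact h
          · exact absurd ⟨le_antisymm (by omega) (by omega), rfl⟩ hnot
        have : 0 < mj N r k L 1 := by simp [mj]; omega
        exact_mod_cast this
      rw [e1, e2, Nat.cast_mul, Nat.cast_mul]
      exact (offdiag_helper ((N:ℝ) - r) _ _ _ hD hnR hapos hm0pos).trans (by ring)
    · -- j = 1, J = 1
      have hc : (-1:ℝ) * (1 - 2 * ((k:ℝ) - L) / ((N:ℝ) - r)) * 1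
            + 2 * Real.sqrt (((k:ℝ) - L) / ((N:ℝ) - r))
              * Real.sqrt (1 - ((k:ℝ) - L) / ((N:ℝ) - r)) * 0
          = 2 / ((N:ℝ) - r) * (mj N r k L 1 : ℝ) - 1 := by
        rw [hm1]
        field_simp
        ring
      rw [hc]
      ring
  · have hlL : ¬ l = L := fun h => hLl h.symm
    have hc1 : ¬(L = l ∧ J = j) := fun h => hLl h.1
    have h0 : uAlphaEntry N r k l j L J = 0 := by
      simp [uAlphaEntry, hlL]
    rw [if_neg hLl, if_neg hc1, h0]
    ring

end Key


/-- The span of the `2k+1` vectors `|η_ℓ^j⟩` is invariant under `U_α`, which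
acts on them by the matrix `u_α`:
`U_α|η_ℓ^j⟩ = ∑_{ℓ',j'} ⟨ℓ',j'|u_α|ℓ,j⟩ |η_{ℓ'}^{j'}⟩`. -/
theorem stmt11 (N r k : ℕ) (hk : 0 < k) (hkr : k ≤ r) (hkN : k < N - r)
    (K : Finset (Fin N)) (hK : K.card = k) :
    ∀ q ∈ pairSet k,
      (Ualpha N r).mulVec (etaVec N r K q.1 q.2)
        = ∑ q' ∈ pairSet k,
            ((uAlphaEntry N r k q.1 q.2 q'.1 q'.2 : ℝ) : ℂ) • etaVec N r K q'.1 q'.2 := by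
  rintro ⟨l, j⟩ hq
  simp only [pairSet, Finset.mem_filter, Finset.mem_product, Finset.mem_range] at hq
  have hl : l ≤ k := by omega
  have hj : j ≤ 1 := by omega
  have hnot : ¬(l = k ∧ j = 1) := hq.2
  have hrN : r ≤ N := by omega
  have hkrN : k + r < N := by omega
  funext p
  have hSr : p.val.1.card = r := p.prop.1
  have hLk : (p.val.1 ∩ K).card ≤ k :=
    hK ▸ Finset.card_le_card Finset.inter_subset_right
  have hJ1 : ({p.val.2} ∩ K).card ≤ 1 := by
    calc ({p.val.2} ∩ K).card
        ≤ ({p.val.2} : Finset (Fin N)).card := Finset.card_le_card Finset.inter_subset_left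
      _ = 1 := Finset.card_singleton _
  have hLJ : ¬((p.val.1 ∩ K).card = k ∧ ({p.val.2} ∩ K).card = 1) := by
    rintro ⟨h1, h2⟩
    have heq : p.val.1 ∩ K = K :=
      Finset.eq_of_subset_of_card_le Finset.inter_subset_right (by rw [hK, h1])
    have hy : p.val.2 ∈ K := by
      by_contra hy
      rw [Finset.singleton_inter_of_notMem hy, Finset.card_empty] at h2
      exact absurd h2 (by norm_num)
    have : p.val.2 ∈ p.val.1 ∩ K := heq.symm ▸ hy
    exact p.prop.2 (Finset.mem_of_mem_inter_left this)
  have hmem : p ∈ etaSet N r K (p.val.1 ∩ K).card ({p.val.2} ∩ K).card :=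
    (mem_etaSet_iff p).2 ⟨rfl, rfl⟩
  have hpos : 0 < (etaSet N r K (p.val.1 ∩ K).card ({p.val.2} ∩ K).card).card :=
    Finset.card_pos.2 ⟨p, hmem⟩
  have hmemPair : ((p.val.1 ∩ K).card, ({p.val.2} ∩ K).card) ∈ pairSet k := by
    simp only [pairSet, Finset.mem_filter, Finset.mem_product, Finset.mem_range]
    exact ⟨⟨by omega, by omega⟩, hLJ⟩
  rw [Ualpha_mulVec hrN, sum_fiber hK hj hSr, Finset.sum_apply,
    Finset.sum_eq_single_of_mem _ hmemPair (fun b hb hne => ?_)]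
  swap
  · have hbne : ¬((p.val.1 ∩ K).card = b.1 ∧ ({p.val.2} ∩ K).card = b.2) := by
      intro h
      exact hne (Prod.ext h.1.symm h.2.symm)
    simp only [Pi.smul_apply, smul_eq_mul, etaVec, mem_etaSet_iff]
    rw [if_neg hbne, mul_zero]
  · simp only [Pi.smul_apply, smul_eq_mul]
    rw [show etaVec N r K (p.val.1 ∩ K).card ({p.val.2} ∩ K).card p
        = ((1 / Real.sqrt ((etaSet N r K (p.val.1 ∩ K).card ({p.val.2} ∩ K).card).card) : ℝ) : ℂ)
      from by rw [etaVec, if_pos hmem]]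
    simp only [etaVec, mem_etaSet_iff]
    have hkey := congrArg (fun x : ℝ => (x : ℂ)) (key hkr hkrN hK hl hj hnot hJ1 hpos)
    push_cast [apply_ite Complex.ofReal] at hkey ⊢
    linear_combination hkey
end

section
/- If {|ψ_n⟩} is an orthonormal eigenbasis of u^{t₂} with eigenvalues e^{i t₂ φ_n}, |m⟩ is a unit vector, and |λ⟩ is a unit eigenvector of u^{t₂}(I − 2|m⟩⟨m|) with eigenvalue e^{iλ} where e^{i(λ − t₂φ_n)} ≠ 1 for all n and ⟨m|λ⟩ ≠ 0, then Σ_n 2|⟨m|ψ_n⟩|² / (1 − e^{i(λ − t₂φ_n)}) = 1, and consequently Σ_n |⟨m|ψ_n⟩|² · sin(λ − t₂φ_n)/(1 − cos(λ − t₂φ_n)) = 0. -/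
open scoped Matrix
open Complex

/-- If `{|ψ_n⟩}` is an orthonormal eigenbasis of the unitary `u` with
`u|ψ_n⟩ = e^{iφ_n}|ψ_n⟩`, `|m⟩` is a unit vector, and `|λ⟩` is a unit
eigenvector of `u^{t₂}(I - 2|m⟩⟨m|)` with eigenvalue `e^{iλ}` where
`e^{i(λ - t₂φ_n)} ≠ 1` for all `n` and `⟨m|λ⟩ ≠ 0`, then
`∑_n 2|⟨m|ψ_n⟩|²/(1 - e^{i(λ - t₂φ_n)}) = 1` and consequently
`∑_n |⟨m|ψ_n⟩|² sin(λ - t₂φ_n)/(1 - cos(λ - t₂φ_n)) = 0`. -/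
theorem stmt17 {n : Type*} [Fintype n] [DecidableEq n]
    (u : Matrix n n ℂ) (hu : u ∈ Matrix.unitaryGroup n ℂ)
    (t₂ : ℕ) (ht₂ : 0 < t₂)
    (φ : n → ℝ) (ψ : n → n → ℂ)
    (hortho : ∀ a b : n, ∑ i, starRingEnd ℂ (ψ a i) * ψ b i
      = if a = b then 1 else 0)
    (heig : ∀ a : n, u.mulVec (ψ a) = Complex.exp (φ a * Complex.I) • ψ a)
    (m lam : n → ℂ)
    (hm : ∑ i, starRingEnd ℂ (m i) * m i = 1)
    (hlamnorm : ∑ i, starRingEnd ℂ (lam i) * lam i = 1)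
    (l : ℝ)
    (hlam : (u ^ t₂).mulVec
        (lam - (2 : ℂ) • ((∑ i, starRingEnd ℂ (m i) * lam i) • m))
      = Complex.exp (l * Complex.I) • lam)
    (hne : ∀ a : n, Complex.exp ((l - t₂ * φ a) * Complex.I) ≠ 1)
    (hmlam : (∑ i, starRingEnd ℂ (m i) * lam i) ≠ 0) :
    (∑ a : n, 2 * (‖∑ i, starRingEnd ℂ (m i) * ψ a i‖ ^ 2 : ℝ)
        / (1 - Complex.exp ((l - t₂ * φ a) * Complex.I)) = 1) ∧
    (∑ a : n, ‖∑ i, starRingEnd ℂ (m i) * ψ a i‖ ^ 2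
        * Real.sin (l - t₂ * φ a) / (1 - Real.cos (l - t₂ * φ a)) = 0) := by
  classical
  set μ : ℂ := ∑ i, starRingEnd ℂ (m i) * lam i with hμ
  set c : n → ℂ := fun a => ∑ i, starRingEnd ℂ (ψ a i) * lam i with hcdef
  set d : n → ℂ := fun a => ∑ i, starRingEnd ℂ (ψ a i) * m i with hddef
  set z : n → ℂ := fun a => Complex.exp ((l - t₂ * φ a) * Complex.I) with hzdef
  have h1z : ∀ a, (1 : ℂ) - z a ≠ 0 := fun a => sub_ne_zero_of_ne (hne a).symm
  -- eigenvalue of powers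
  have heigpow : ∀ k : ℕ, ∀ a, (u ^ k).mulVec (ψ a)
      = Complex.exp ((k : ℂ) * φ a * Complex.I) • ψ a := by
    intro k
    induction k with
    | zero => intro a; simp
    | succ k ih =>
      intro a
      rw [pow_succ, ← Matrix.mulVec_mulVec, heig a, Matrix.mulVec_smul, ih a,
        smul_smul, ← Complex.exp_add]
      congr 2
      push_cast
      ring
  -- unitarity of u ^ t₂
  have hU : (u ^ t₂)ᴴ * (u ^ t₂) = 1 := by
    have := Matrix.mem_unitaryGroup_iff'.mp (pow_mem hu t₂)
    simpa [Matrix.star_eq_conjTranspose] using this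
  -- conjTranspose eigenvector
  have hUH : ∀ a, (u ^ t₂)ᴴ.mulVec (ψ a)
      = Complex.exp (-((t₂ : ℂ) * φ a) * Complex.I) • ψ a := by
    intro a
    have h1 : (u ^ t₂)ᴴ.mulVec ((u ^ t₂).mulVec (ψ a)) = ψ a := by
      rw [Matrix.mulVec_mulVec, hU, Matrix.one_mulVec]
    rw [heigpow t₂ a, Matrix.mulVec_smul] at h1
    have h2 : Complex.exp (-((t₂ : ℂ) * φ a) * Complex.I) • ψ a
        = Complex.exp (-((t₂ : ℂ) * φ a) * Complex.I) •
          (Complex.exp ((t₂ : ℂ) * φ a * Complex.I) • (u ^ t₂)ᴴ.mulVec (ψ a)) := by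
      rw [h1]
    rw [smul_smul, ← Complex.exp_add] at h2
    rw [h2]
    congr 1
    · ring_nf
      simp
  -- pairing lemma
  have hpair : ∀ a (w : n → ℂ),
      ∑ i, starRingEnd ℂ (ψ a i) * ((u ^ t₂).mulVec w) i
        = Complex.exp ((t₂ : ℂ) * φ a * Complex.I) * ∑ i, starRingEnd ℂ (ψ a i) * w i := by
    intro a w
    have h1 : ∀ j, ∑ i, starRingEnd ℂ (ψ a i) * (u ^ t₂) i j
        = Complex.exp ((t₂ : ℂ) * φ a * Complex.I) * starRingEnd ℂ (ψ a j) := by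
      intro j
      have h0 := congrFun (hUH a) j
      simp only [Matrix.mulVec, dotProduct, Matrix.conjTranspose_apply,
        Pi.smul_apply, smul_eq_mul, Complex.star_def] at h0
      have h2 := congrArg (starRingEnd ℂ) h0
      simp only [map_sum, map_mul, Complex.conj_conj, ← Complex.exp_conj,
        map_neg, Complex.conj_I, Complex.conj_ofReal, map_natCast, neg_mul,
        neg_neg, mul_neg] at h2
      rw [show (∑ i, starRingEnd ℂ (ψ a i) * (u ^ t₂) i j)
          = ∑ x, (u ^ t₂) x j * starRingEnd ℂ (ψ a x) from
        Finset.sum_congr rfl fun i _ => mul_comm _ _, h2]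
    calc ∑ i, starRingEnd ℂ (ψ a i) * ((u ^ t₂).mulVec w) i
        = ∑ i, ∑ j, starRingEnd ℂ (ψ a i) * ((u ^ t₂) i j * w j) := by
          simp [Matrix.mulVec, dotProduct, Finset.mul_sum]
      _ = ∑ j, (∑ i, starRingEnd ℂ (ψ a i) * (u ^ t₂) i j) * w j := by
          rw [Finset.sum_comm]
          exact Finset.sum_congr rfl fun j _ => by
            rw [Finset.sum_mul]
            exact Finset.sum_congr rfl fun i _ => by ring
      _ = ∑ j, (Complex.exp ((t₂ : ℂ) * φ a * Complex.I) * starRingEnd ℂ (ψ a j)) * w j := by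
          exact Finset.sum_congr rfl fun j _ => by rw [h1 j]
      _ = Complex.exp ((t₂ : ℂ) * φ a * Complex.I) * ∑ j, starRingEnd ℂ (ψ a j) * w j := by
          rw [Finset.mul_sum]
          exact Finset.sum_congr rfl fun j _ => by ring
  -- key componentwise equation
  have hkey : ∀ a, c a * (1 - z a) = 2 * μ * d a := by
    intro a
    have h0 := congrArg (fun v : n → ℂ => ∑ i, starRingEnd ℂ (ψ a i) * v i) hlam
    rw [hpair a] at h0
    have hL : ∑ i, starRingEnd ℂ (ψ a i) * (lam - (2:ℂ) • (μ • m)) i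
        = c a - 2 * μ * d a := by
      have hterm : ∀ i, starRingEnd ℂ (ψ a i) * (lam - (2:ℂ) • (μ • m)) i
          = starRingEnd ℂ (ψ a i) * lam i - 2 * μ * (starRingEnd ℂ (ψ a i) * m i) := by
        intro i
        simp only [Pi.sub_apply, Pi.smul_apply, smul_eq_mul]
        ring
      rw [Finset.sum_congr rfl fun i _ => hterm i, Finset.sum_sub_distrib,
        ← Finset.mul_sum]
    have hR : ∑ i, starRingEnd ℂ (ψ a i) * (Complex.exp ((l:ℂ) * Complex.I) • lam) i
        = Complex.exp ((l:ℂ) * Complex.I) * c a := by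
      simp only [Pi.smul_apply, smul_eq_mul, hcdef, Finset.mul_sum]
      refine Finset.sum_congr rfl fun i _ => ?_
      ring
    rw [hL, hR] at h0
    have hE : Complex.exp ((l:ℂ) * Complex.I)
        = z a * Complex.exp ((t₂:ℂ) * φ a * Complex.I) := by
      rw [hzdef, ← Complex.exp_add]
      congr 1
      push_cast
      ring
    rw [hE] at h0
    have h3 : c a - 2 * μ * d a = z a * c a :=
      mul_left_cancel₀ (Complex.exp_ne_zero ((t₂:ℂ) * φ a * Complex.I)) (by
        linear_combination h0)
    linear_combination h3
  -- completeness relation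
  have hcomp : ∀ i j : n, ∑ a, ψ a i * starRingEnd ℂ (ψ a j)
      = if i = j then 1 else 0 := by
    intro i j
    have hPP : (Matrix.of ψ) * (Matrix.of ψ)ᴴ = 1 := by
      ext a b
      simp only [Matrix.mul_apply, Matrix.conjTranspose_apply, Matrix.of_apply,
        Matrix.one_apply, Complex.star_def]
      have h5 := congrArg (starRingEnd ℂ) (hortho a b)
      rw [map_sum] at h5
      simp only [map_mul, Complex.conj_conj] at h5
      rw [h5]
      split <;> simp
    have hPP' : (Matrix.of ψ)ᴴ * (Matrix.of ψ) = 1 := mul_eq_one_comm.mp hPP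
    have h4 := congrFun (congrFun hPP' j) i
    simp only [Matrix.mul_apply, Matrix.conjTranspose_apply, Matrix.of_apply,
      Matrix.one_apply, Complex.star_def] at h4
    rw [show (∑ a, ψ a i * starRingEnd ℂ (ψ a j))
        = ∑ a, starRingEnd ℂ (ψ a j) * ψ a i from
      Finset.sum_congr rfl fun a _ => mul_comm _ _, h4]
    simp [eq_comm]
  -- Parseval
  have hpars : ∑ a, starRingEnd ℂ (d a) * c a = μ := by
    have hterm : ∀ a, starRingEnd ℂ (d a) * c a
        = ∑ i, ∑ j, (starRingEnd ℂ (m i) * lam j) * (ψ a i * starRingEnd ℂ (ψ a j)) := by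
      intro a
      rw [hddef, hcdef]
      simp only [map_sum, map_mul, Complex.conj_conj]
      rw [Finset.sum_mul_sum]
      exact Finset.sum_congr rfl fun i _ => Finset.sum_congr rfl fun j _ => by ring
    rw [Finset.sum_congr rfl fun a _ => hterm a, Finset.sum_comm]
    have hswap : ∀ i : n,
        ∑ a, ∑ j, (starRingEnd ℂ (m i) * lam j) * (ψ a i * starRingEnd ℂ (ψ a j))
        = ∑ j, (starRingEnd ℂ (m i) * lam j) * ∑ a, ψ a i * starRingEnd ℂ (ψ a j) := by
      intro i
      rw [Finset.sum_comm]
      exact Finset.sum_congr rfl fun j _ => by rw [Finset.mul_sum]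
    rw [Finset.sum_congr rfl fun i _ => hswap i, hμ]
    refine Finset.sum_congr rfl fun i _ => ?_
    rw [Finset.sum_congr rfl fun j _ => by rw [hcomp i j]]
    simp
  -- |⟨m|ψ_a⟩|² as a complex number
  have habs : ∀ a, ((‖∑ i, starRingEnd ℂ (m i) * ψ a i‖ ^ 2 : ℝ) : ℂ)
      = starRingEnd ℂ (d a) * d a := by
    intro a
    have hXd : (∑ i, starRingEnd ℂ (m i) * ψ a i) = starRingEnd ℂ (d a) := by
      rw [hddef]
      simp only [map_sum, map_mul, Complex.conj_conj]
      exact Finset.sum_congr rfl fun i _ => mul_comm _ _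
    rw [hXd, Complex.sq_norm, ← Complex.mul_conj, Complex.conj_conj]
  -- first goal
  have hgoal1 : ∑ a : n,
      2 * ((‖∑ i, starRingEnd ℂ (m i) * ψ a i‖ ^ 2 : ℝ) : ℂ) / (1 - z a)
      = 1 := by
    apply mul_left_cancel₀ hmlam
    rw [Finset.mul_sum, mul_one]
    calc ∑ a, μ * (2 * ((‖∑ i, starRingEnd ℂ (m i) * ψ a i‖ ^ 2 : ℝ) : ℂ)
            / (1 - z a))
        = ∑ a, starRingEnd ℂ (d a) * c a := by
          refine Finset.sum_congr rfl fun a _ => ?_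
          rw [habs a]
          have h6 : c a = 2 * μ * d a / (1 - z a) := by
            rw [eq_div_iff (h1z a)]
            linear_combination hkey a
          rw [h6]
          field_simp [h1z a]
      _ = μ := hpars
  constructor
  · exact hgoal1
  · have him := congrArg Complex.im hgoal1
    rw [Complex.im_sum] at him
    simp only [Complex.one_im] at him
    rw [← him]
    refine Finset.sum_congr rfl fun a _ => ?_
    set θ : ℝ := l - t₂ * φ a with hθ
    set r : ℝ := ‖∑ i, starRingEnd ℂ (m i) * ψ a i‖ ^ 2 with hr
    have hz : z a = Complex.exp ((θ:ℂ) * Complex.I) := by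
      rw [hzdef, hθ]
      push_cast
      ring_nf
    have hcos : Real.cos θ ≠ 1 := by
      intro h
      apply hne a
      have hsin : Real.sin θ = 0 := by nlinarith [Real.sin_sq_add_cos_sq θ]
      have : Complex.exp ((θ:ℂ) * Complex.I) = 1 := by
        rw [Complex.exp_mul_I, ← Complex.ofReal_cos, ← Complex.ofReal_sin, h, hsin]
        simp
      rw [← hz] at this
      rw [hzdef] at this
      exact this
    have hwre : ((1:ℂ) - z a).re = 1 - Real.cos θ := by
      rw [hz]
      simp [Complex.sub_re, Complex.exp_ofReal_mul_I_re]
    have hwim : ((1:ℂ) - z a).im = - Real.sin θ := by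
      rw [hz]
      simp [Complex.sub_im, Complex.exp_ofReal_mul_I_im]
    have hns : Complex.normSq (1 - z a) = 2 * (1 - Real.cos θ) := by
      rw [Complex.normSq_apply, hwre, hwim]
      nlinarith [Real.sin_sq_add_cos_sq θ]
    have hcos' : 1 - Real.cos θ ≠ 0 := sub_ne_zero_of_ne (Ne.symm hcos)
    rw [Complex.div_im, hns, hwre, hwim]
    have h2re : (2 * ((r:ℝ):ℂ)).re = 2 * r := by simp
    have h2im : (2 * ((r:ℝ):ℂ)).im = 0 := by simp
    rw [h2re, h2im]
    field_simp
    ring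
end

section
/- With ⟨k,0|ψ_0⟩ = Π_{i=0}^{k−1} √((r−i)/(N−i)) and ⟨k,0|ψ_k⟩ = (1/√2)·√(Π_{i=0}^{k−1}(N−r−i) / Π_{i=k−1}^{2k−2}(N−i)), one has ⟨k,0|ψ_0⟩² = Π_{i=0}^{k−1}(r−i)/(N−i) = Θ((r/N)^k) as N → ∞ with r = ⌊N^{k/(k+1)}⌋, and ⟨k,0|ψ_k⟩² → 1/2 as N → ∞. -/
open Filter Asymptotics

/-- `r(N) = ⌊N^{k/(k+1)}⌋`. -/
noncomputable def rOf (k N : ℕ) : ℕ := ⌊(N : ℝ) ^ ((k : ℝ) / (k + 1))⌋₊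

lemma rOf_atTop (k : ℕ) (hk : 0 < k) :
    Tendsto (fun N : ℕ => rOf k N) atTop atTop := by
  have hk' : (0:ℝ) < k := by exact_mod_cast hk
  have hpos : 0 < (k : ℝ) / (k + 1) := by positivity
  exact tendsto_nat_floor_atTop.comp
    ((tendsto_rpow_atTop hpos).comp tendsto_natCast_atTop_atTop)

lemma rOf_cast_atTop (k : ℕ) (hk : 0 < k) :
    Tendsto (fun N : ℕ => (rOf k N : ℝ)) atTop atTop :=
  tendsto_natCast_atTop_atTop.comp (rOf_atTop k hk)

lemma rOf_div_tendsto (k : ℕ) (hk : 0 < k) :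
    Tendsto (fun N : ℕ => (rOf k N : ℝ) / N) atTop (nhds 0) := by
  have hk' : (0:ℝ) < k := by exact_mod_cast hk
  have h1 : Tendsto (fun N : ℕ => (N:ℝ) ^ (-(1/((k:ℝ)+1)))) atTop (nhds 0) :=
    (tendsto_rpow_neg_atTop (by positivity)).comp tendsto_natCast_atTop_atTop
  apply tendsto_of_tendsto_of_tendsto_of_le_of_le' tendsto_const_nhds h1
  · filter_upwards [eventually_ge_atTop 1] with N hN
    positivity
  · filter_upwards [eventually_ge_atTop 1] with N hN
    have hN0 : (0:ℝ) < N := by exact_mod_cast hN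
    have hfl : (rOf k N : ℝ) ≤ (N:ℝ) ^ ((k:ℝ)/(k+1)) :=
      Nat.floor_le (by positivity)
    have hstep : (rOf k N : ℝ) / N ≤ (N:ℝ) ^ ((k:ℝ)/(k+1)) / N := by gcongr
    have hexp : (k:ℝ)/(k+1) - 1 = -(1/((k:ℝ)+1)) := by
      field_simp
      ring
    calc (rOf k N : ℝ) / N ≤ (N:ℝ) ^ ((k:ℝ)/(k+1)) / N := hstep
      _ = (N:ℝ) ^ ((k:ℝ)/(k+1)) / (N:ℝ) ^ (1:ℝ) := by rw [Real.rpow_one]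
      _ = (N:ℝ) ^ ((k:ℝ)/(k+1) - 1) := by rw [← Real.rpow_sub hN0]
      _ = (N:ℝ) ^ (-(1/((k:ℝ)+1))) := by rw [hexp]

/-- With `⟨k,0|ψ_0⟩ = ∏_{i<k} √((r-i)/(N-i))` and
`⟨k,0|ψ_k⟩² = (1/2) ∏_{i<k}(N-r-i) / ∏_{i=k-1}^{2k-2}(N-i)`, where
`r = ⌊N^{k/(k+1)}⌋`: eventually `⟨k,0|ψ_0⟩² = ∏_{i<k}(r-i)/(N-i)`, this
quantity is `Θ((r/N)^k)` as `N → ∞`, and `⟨k,0|ψ_k⟩² → 1/2`. -/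
theorem stmt19 (k : ℕ) (hk : 0 < k) :
    (∀ᶠ N : ℕ in atTop,
      (∏ i ∈ Finset.range k,
          Real.sqrt (((rOf k N : ℝ) - i) / ((N : ℝ) - i))) ^ 2
        = ∏ i ∈ Finset.range k, ((rOf k N : ℝ) - i) / ((N : ℝ) - i)) ∧
    (fun N : ℕ => ∏ i ∈ Finset.range k, ((rOf k N : ℝ) - i) / ((N : ℝ) - i))
      =Θ[atTop] (fun N : ℕ => ((rOf k N : ℝ) / (N : ℝ)) ^ k) ∧
    Tendsto
      (fun N : ℕ =>
        (1 / 2 : ℝ) * (∏ i ∈ Finset.range k, ((N : ℝ) - (rOf k N : ℝ) - i))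
          / (∏ i ∈ Finset.Icc (k - 1) (2 * k - 2), ((N : ℝ) - i)))
      atTop (nhds (1 / 2)) := by
  have hrT := rOf_atTop k hk
  have hrC := rOf_cast_atTop k hk
  have hrd := rOf_div_tendsto k hk
  have hev : ∀ᶠ N : ℕ in atTop, k ≤ rOf k N ∧ k ≤ N :=
    (hrT.eventually (eventually_ge_atTop k)).and (eventually_ge_atTop k)
  refine ⟨?_, ?_, ?_⟩
  · -- Part 1
    filter_upwards [hev] with N ⟨hr, hN⟩
    rw [← Finset.prod_pow]
    refine Finset.prod_congr rfl fun i hi => ?_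
    rw [Finset.mem_range] at hi
    have h1 : (i:ℝ) < rOf k N := by exact_mod_cast lt_of_lt_of_le hi hr
    have h2 : (i:ℝ) < N := by exact_mod_cast lt_of_lt_of_le hi hN
    exact Real.sq_sqrt (div_nonneg (by linarith) (by linarith))
  · -- Part 2
    have hh : Tendsto (fun N : ℕ => ∏ i ∈ Finset.range k,
        ((1 - (i:ℝ)/(rOf k N)) / (1 - (i:ℝ)/N))) atTop (nhds 1) := by
      have key : Tendsto (fun N : ℕ => ∏ i ∈ Finset.range k,
          ((1 - (i:ℝ)/(rOf k N)) / (1 - (i:ℝ)/N))) atTop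
          (nhds (∏ _i ∈ Finset.range k, ((1:ℝ)/1))) := by
        refine tendsto_finset_prod _ fun i _ => ?_
        have h1 : Tendsto (fun N : ℕ => (1 - (i:ℝ)/(rOf k N))) atTop (nhds 1) := by
          have := (tendsto_const_nhds (x := (i:ℝ)) (f := atTop)).div_atTop hrC
          simpa using tendsto_const_nhds.sub this
        have h2 : Tendsto (fun N : ℕ => (1 - (i:ℝ)/(N:ℝ))) atTop (nhds 1) := by
          have := (tendsto_const_nhds (x := (i:ℝ)) (f := atTop)).div_atTop
            (tendsto_natCast_atTop_atTop (R := ℝ))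
          simpa using tendsto_const_nhds.sub this
        exact h1.div h2 one_ne_zero
      simpa using key
    have hgne : ∀ᶠ N : ℕ in atTop, ((rOf k N : ℝ) / N) ^ k ≠ 0 := by
      filter_upwards [hev] with N ⟨hr, hN⟩
      have h1 : (0:ℝ) < rOf k N := by exact_mod_cast lt_of_lt_of_le hk hr
      have h2 : (0:ℝ) < N := by exact_mod_cast lt_of_lt_of_le hk hN
      positivity
    have hfg : Tendsto (fun N : ℕ =>
        (∏ i ∈ Finset.range k, ((rOf k N : ℝ) - i) / ((N : ℝ) - i))
          / ((rOf k N : ℝ) / N) ^ k) atTop (nhds 1) := by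
      refine hh.congr' ?_
      filter_upwards [hev] with N ⟨hr, hN⟩
      have hr0 : (0:ℝ) < rOf k N := by exact_mod_cast lt_of_lt_of_le hk hr
      have hN0 : (0:ℝ) < N := by exact_mod_cast lt_of_lt_of_le hk hN
      have key : (∏ i ∈ Finset.range k, ((rOf k N : ℝ) - i) / ((N : ℝ) - i))
          = ((rOf k N : ℝ) / N) ^ k * ∏ i ∈ Finset.range k,
            ((1 - (i:ℝ)/(rOf k N)) / (1 - (i:ℝ)/N)) := by
        have hpow : ((rOf k N : ℝ)/N)^k = ∏ _i ∈ Finset.range k, ((rOf k N : ℝ)/N) := by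
          rw [Finset.prod_const, Finset.card_range]
        rw [hpow, ← Finset.prod_mul_distrib]
        refine Finset.prod_congr rfl fun i hi => ?_
        rw [Finset.mem_range] at hi
        have hNi : ((N:ℝ) - i) ≠ 0 := by
          have : (i:ℝ) < N := by exact_mod_cast lt_of_lt_of_le hi hN
          linarith
        field_simp
      rw [key, mul_comm, mul_div_assoc, div_self (by positivity), mul_one]
    exact ((isEquivalent_iff_tendsto_one hgne).2 hfg).isTheta
  · -- Part 3
    have hA : Tendsto (fun N : ℕ => ∏ i ∈ Finset.range k,
        (((N:ℝ) - (rOf k N : ℝ) - i) / N)) atTop (nhds 1) := by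
      have key : Tendsto (fun N : ℕ => ∏ i ∈ Finset.range k,
          (((N:ℝ) - (rOf k N : ℝ) - i) / N)) atTop
          (nhds (∏ _i ∈ Finset.range k, (1:ℝ))) := by
        refine tendsto_finset_prod _ fun i _ => ?_
        have hiN : Tendsto (fun N : ℕ => (i:ℝ)/(N:ℝ)) atTop (nhds 0) :=
          (tendsto_const_nhds (x := (i:ℝ)) (f := atTop)).div_atTop
            (tendsto_natCast_atTop_atTop (R := ℝ))
        have h1 : Tendsto (fun N : ℕ => 1 - (rOf k N : ℝ)/N - (i:ℝ)/N) atTop (nhds 1) := by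
          simpa using (tendsto_const_nhds.sub hrd).sub hiN
        refine h1.congr' ?_
        filter_upwards [eventually_ge_atTop 1] with N hN
        have hN0 : ((N:ℝ)) ≠ 0 := by
          have : (0:ℝ) < N := by exact_mod_cast hN
          linarith
        field_simp
      simpa using key
    have hB : Tendsto (fun N : ℕ => ∏ i ∈ Finset.Icc (k-1) (2*k-2),
        (((N:ℝ) - i) / N)) atTop (nhds 1) := by
      have key : Tendsto (fun N : ℕ => ∏ i ∈ Finset.Icc (k-1) (2*k-2),
          (((N:ℝ) - i) / N)) atTop
          (nhds (∏ _i ∈ Finset.Icc (k-1) (2*k-2), (1:ℝ))) := by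
        refine tendsto_finset_prod _ fun i _ => ?_
        have hiN : Tendsto (fun N : ℕ => (i:ℝ)/(N:ℝ)) atTop (nhds 0) :=
          (tendsto_const_nhds (x := (i:ℝ)) (f := atTop)).div_atTop
            (tendsto_natCast_atTop_atTop (R := ℝ))
        have h1 : Tendsto (fun N : ℕ => 1 - (i:ℝ)/N) atTop (nhds 1) := by
          simpa using tendsto_const_nhds.sub hiN
        refine h1.congr' ?_
        filter_upwards [eventually_ge_atTop 1] with N hN
        have hN0 : ((N:ℝ)) ≠ 0 := by
          have : (0:ℝ) < N := by exact_mod_cast hN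
          linarith
        field_simp
      simpa using key
    have hcard : (Finset.Icc (k-1) (2*k-2)).card = k := by
      rw [Nat.card_Icc]; omega
    have hmain : Tendsto (fun N : ℕ =>
        (1/2 : ℝ) * ((∏ i ∈ Finset.range k, (((N:ℝ) - (rOf k N : ℝ) - i) / N))
          / (∏ i ∈ Finset.Icc (k-1) (2*k-2), (((N:ℝ) - i) / N)))) atTop (nhds (1/2)) := by
      have := (hA.div hB one_ne_zero).const_mul (1/2 : ℝ)
      simpa using this
    refine hmain.congr' ?_
    filter_upwards [eventually_ge_atTop (2*k)] with N hN
    have hN0 : (0:ℝ) < N := by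
      have : 0 < N := lt_of_lt_of_le (by omega) hN
      exact_mod_cast this
    have hNk : ((N:ℝ))^k ≠ 0 := by positivity
    have hAeq : (∏ i ∈ Finset.range k, (((N:ℝ) - (rOf k N : ℝ) - i) / N))
        = (∏ i ∈ Finset.range k, ((N:ℝ) - (rOf k N : ℝ) - i)) / (N:ℝ)^k := by
      rw [Finset.prod_div_distrib, Finset.prod_const, Finset.card_range]
    have hBeq : (∏ i ∈ Finset.Icc (k-1) (2*k-2), (((N:ℝ) - i) / N))
        = (∏ i ∈ Finset.Icc (k-1) (2*k-2), ((N:ℝ) - i)) / (N:ℝ)^k := by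
      rw [Finset.prod_div_distrib, Finset.prod_const, hcard]
    have hden : (∏ i ∈ Finset.Icc (k-1) (2*k-2), ((N:ℝ) - i)) ≠ 0 := by
      refine Finset.prod_ne_zero_iff.2 fun i hi => ?_
      rw [Finset.mem_Icc] at hi
      have hiN : i < N := by omega
      have : (i:ℝ) < N := by exact_mod_cast hiN
      linarith
    rw [hAeq, hBeq]
    field_simp
end
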